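/- Fix N > 0. There exist constants C > 0 and a₀ > 0 such that for all a with 0 < a ≤ a₀, | ∫_ℝ q₀(z)·L(z) dz + a⁴/N² | ≤ C·a⁶. In other words, the mean of the log-likelihood ratio L under q₀ equals −a⁴/N² + O(a⁶) as a → 0⁺. -/

import Mathlib

open MeasureTheory

/-- Density of the Gaussian distribution with mean `0` and variance `N/2`. -/
noncomputable def q0 (N z : ℝ) : ℝ := (Real.sqrt (Real.pi * N))⁻¹ * Real.exp (-z ^ 2 / N)

/-- Density of the Gaussian distribution with mean `a` and variance `N/2`. -/
noncomputable def qa (N a z : ℝ) : ℝ := (Real.sqrt (Real.pi * N))⁻¹ * Real.exp (-(z - a) ^ 2 / N)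

/-- The binary mixture density `½ q_a + ½ q_{-a}`. -/
noncomputable def qmix (N a z : ℝ) : ℝ := (1 / 2) * qa N a z + (1 / 2) * qa N (-a) z

/-- The log-likelihood ratio `log (q̃(z)/q₀(z))`. -/
noncomputable def llr (N a z : ℝ) : ℝ := Real.log (qmix N a z / q0 N z)

section Aux

open Real

lemma aux_cosh_le_exp_abs (x : ℝ) : Real.cosh x ≤ Real.exp |x| := by
  rw [← Real.cosh_abs, Real.cosh_eq]
  have h2 : Real.exp (-|x|) ≤ Real.exp |x| :=
    Real.exp_le_exp.2 (neg_abs_le x |>.trans (le_abs_self x))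
  linarith

lemma aux_log_cosh_le_abs (x : ℝ) : Real.log (Real.cosh x) ≤ |x| := by
  have := Real.log_le_log (Real.cosh_pos x) (aux_cosh_le_exp_abs x)
  simpa [Real.log_exp] using this

lemma aux_cosh_taylor {x : ℝ} (hx : |x| ≤ 1) :
    |Real.cosh x - (1 + x ^ 2 / 2 + x ^ 4 / 24)| ≤ 7 / 4320 * x ^ 6 := by
  have hx' : |(-x)| ≤ 1 := by rwa [abs_neg]
  have e1 := Real.exp_bound hx (n := 6) (by norm_num)
  have e2 := Real.exp_bound hx' (n := 6) (by norm_num)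
  rw [abs_neg] at e2
  simp only [Finset.sum_range_succ, Finset.sum_range_zero] at e1 e2
  norm_num [Nat.factorial] at e1 e2
  rw [Real.cosh_eq]
  have h6 : |x| ^ 6 = x ^ 6 := by rw [← abs_pow, abs_of_nonneg (by positivity)]
  rw [h6] at e1 e2
  rw [abs_le] at e1 e2 ⊢
  constructor <;> linarith [e1.1, e1.2, e2.1, e2.2]

set_option maxHeartbeats 1000000 in
lemma aux_log_cosh_bound (x : ℝ) :
    |Real.log (Real.cosh x) - (x ^ 2 / 2 - x ^ 4 / 12)| ≤ 5 * x ^ 6 := by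
  rcases le_or_gt (|x|) 1 with hx | hx
  · have hx2 : x ^ 2 ≤ 1 := by nlinarith [abs_nonneg x, sq_abs x]
    have ht := aux_cosh_taylor hx
    obtain ⟨c, hc⟩ : ∃ c, c = Real.cosh x - 1 := ⟨_, rfl⟩
    have hd' : |c - (x ^ 2 / 2 + x ^ 4 / 24)| ≤ 7 / 4320 * x ^ 6 := by
      have h : Real.cosh x - (1 + x ^ 2 / 2 + x ^ 4 / 24)
          = c - (x ^ 2 / 2 + x ^ 4 / 24) := by rw [hc]; ring
      rwa [h] at ht
    rw [abs_le] at hd'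
    have hx4 : x ^ 4 ≤ x ^ 2 := by nlinarith [sq_nonneg x]
    have hx6 : x ^ 6 ≤ x ^ 4 := by nlinarith [sq_nonneg x, sq_nonneg (x^2)]
    have hc0 : 0 ≤ c := by rw [hc]; linarith [Real.one_le_cosh x]
    have hcx : c ≤ x ^ 2 := by nlinarith
    have hclt : c ≤ 11 / 20 := by nlinarith
    have hlt1 : |(-c)| < 1 := by rw [abs_neg, abs_of_nonneg hc0]; linarith
    have hlog := Real.abs_log_sub_add_sum_range_le hlt1 2
    simp only [Finset.sum_range_succ, Finset.sum_range_zero] at hlog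
    rw [abs_neg, abs_of_nonneg hc0] at hlog
    norm_num at hlog
    have hcosh1 : Real.log (Real.cosh x) = Real.log (1 + c) := by rw [hc]; ring_nf
    have hc3 : c ^ 3 / (1 - c) ≤ 20 / 9 * x ^ 6 := by
      have h1 : c ^ 3 ≤ x ^ 6 := by
        have h := pow_le_pow_left₀ hc0 hcx 3
        calc c ^ 3 ≤ (x ^ 2) ^ 3 := h
          _ = x ^ 6 := by ring
      rw [div_le_iff₀ (by linarith : (0:ℝ) < 1 - c)]
      nlinarith [h1, mul_nonneg (by positivity : (0:ℝ) ≤ x ^ 6)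
        (by linarith : (0:ℝ) ≤ 11/20 - c)]
    rw [hcosh1]
    rw [abs_le] at hlog ⊢
    have hcsq : |c ^ 2 - x ^ 4 / 4| ≤ 3 / 40 * x ^ 6 := by
      have h1 : c ^ 2 - x ^ 4 / 4 = (c - x^2/2) * (c + x^2/2) := by ring
      have h2 : |c - x^2/2| ≤ (1/24 + 7/4320) * x ^ 4 := by
        rw [abs_le]; constructor <;> nlinarith
      have h3 : c + x^2/2 ≤ 3/2 * x ^ 2 := by nlinarith
      have h4 : 0 ≤ c + x^2/2 := by positivity
      rw [h1, abs_mul, abs_of_nonneg h4]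
      calc |c - x^2/2| * (c + x^2/2) ≤ ((1/24 + 7/4320) * x^4) * (3/2 * x^2) :=
            mul_le_mul h2 h3 h4 (by positivity)
        _ ≤ 3/40 * x ^ 6 := by nlinarith [sq_nonneg (x^3)]
    rw [abs_le] at hcsq
    constructor <;> linarith [hlog.1, hlog.2, hc3, hcsq.1, hcsq.2, hd'.1, hd'.2]
  · have h1 : 1 ≤ x ^ 2 := by nlinarith [sq_abs x]
    have h2 : x ^ 2 ≤ x ^ 4 := by nlinarith
    have h4 : x ^ 4 ≤ x ^ 6 := by nlinarith [sq_nonneg (x^2), sq_nonneg x]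
    have habs : |x| ≤ x ^ 6 := by nlinarith [sq_abs x, abs_nonneg x, sq_nonneg (|x| - 1)]
    have hl := aux_log_cosh_le_abs x
    have hn := Real.log_nonneg (Real.one_le_cosh x)
    rw [abs_le]; constructor <;> nlinarith

lemma aux_integrable_pow_gauss {b : ℝ} (hb : 0 < b) (n : ℕ) :
    Integrable fun x : ℝ => x ^ n * Real.exp (-b * x ^ 2) := by
  have hb2 : 0 < b / 2 := by linarith
  apply Integrable.mono' (((integrable_exp_neg_mul_sq hb2).const_mul
    (1 + n.factorial * (2 / b) ^ n)))
  · exact (continuous_pow n |>.mul (by continuity)).aestronglyMeasurable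
  · filter_upwards with x
    have key : (x ^ 2) ^ n * Real.exp (-b * x ^ 2) ≤
        n.factorial * (2 / b) ^ n * Real.exp (-(b / 2) * x ^ 2) := by
      have h1 := Real.pow_div_factorial_le_exp (x := (b/2) * x^2) (by positivity) n
      have h2 : (x ^ 2) ^ n ≤ n.factorial * (2 / b) ^ n * Real.exp ((b / 2) * x ^ 2) := by
        have h3 : ((b/2) * x^2) ^ n = (b/2)^n * (x^2)^n := by rw [mul_pow]
        rw [h3] at h1
        have h5 : (2/b)^n * (b/2)^n = 1 := by
          rw [← mul_pow, div_mul_div_comm,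
            show (2 * b) / (b * 2) = 1 by rw [mul_comm]; field_simp]
          exact one_pow n
        have hf : (0:ℝ) < n.factorial := by positivity
        calc (x^2)^n = n.factorial * (2/b)^n * ((b/2)^n * (x^2)^n / n.factorial) := by
                rw [show (n.factorial:ℝ) * (2/b)^n * ((b/2)^n * (x^2)^n / n.factorial)
                    = ((2/b)^n * (b/2)^n) * (x^2)^n * ((n.factorial:ℝ) / n.factorial) by ring,
                  h5, div_self hf.ne']
                ring
          _ ≤ n.factorial * (2/b)^n * Real.exp ((b/2) * x^2) := by
                apply mul_le_mul_of_nonneg_left _ (by positivity)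
                exact h1
      calc (x ^ 2) ^ n * Real.exp (-b * x ^ 2)
          ≤ (n.factorial * (2 / b) ^ n * Real.exp ((b / 2) * x ^ 2)) * Real.exp (-b * x ^ 2) :=
            mul_le_mul_of_nonneg_right h2 (Real.exp_pos _).le
        _ = n.factorial * (2 / b) ^ n * Real.exp (-(b / 2) * x ^ 2) := by
            rw [mul_assoc, ← Real.exp_add]; ring_nf
    have habs : ‖x ^ n * Real.exp (-b * x ^ 2)‖ = |x| ^ n * Real.exp (-b * x ^ 2) := by
      rw [norm_mul, norm_pow, Real.norm_eq_abs, Real.norm_eq_abs,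
        abs_of_pos (Real.exp_pos _)]
    rw [habs]
    have hcase : |x| ^ n ≤ 1 + (x ^ 2) ^ n := by
      rcases le_or_gt (|x|) 1 with h | h
      · have := pow_le_one₀ (abs_nonneg x) h (n := n)
        nlinarith [pow_nonneg (sq_nonneg x) n]
      · have h1 : |x| ^ n ≤ (|x| ^ 2) ^ n := by
          rw [← pow_mul]
          exact pow_le_pow_right₀ h.le (by omega)
        rw [sq_abs] at h1
        nlinarith
    have he : Real.exp (-b * x ^ 2) ≤ Real.exp (-(b/2) * x ^ 2) := by
      apply Real.exp_le_exp.2; nlinarith [sq_nonneg x]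
    calc |x| ^ n * Real.exp (-b * x ^ 2)
        ≤ (1 + (x ^ 2) ^ n) * Real.exp (-b * x ^ 2) :=
          mul_le_mul_of_nonneg_right hcase (Real.exp_pos _).le
      _ = Real.exp (-b * x ^ 2) + (x ^ 2) ^ n * Real.exp (-b * x ^ 2) := by ring
      _ ≤ Real.exp (-(b/2) * x ^ 2) + n.factorial * (2 / b) ^ n * Real.exp (-(b / 2) * x ^ 2) := by
          linarith
      _ = (1 + n.factorial * (2 / b) ^ n) * Real.exp (-(b / 2) * x ^ 2) := by ring

lemma aux_gauss_moment_rec {b : ℝ} (hb : 0 < b) (n : ℕ) :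
    (n + 1 : ℝ) * ∫ x : ℝ, x ^ n * Real.exp (-b * x ^ 2)
      = 2 * b * ∫ x : ℝ, x ^ (n + 2) * Real.exp (-b * x ^ 2) := by
  have hin := aux_integrable_pow_gauss hb n
  have hin2 := aux_integrable_pow_gauss hb (n + 2)
  have hin1 := aux_integrable_pow_gauss hb (n + 1)
  have hderiv : ∀ x : ℝ, HasDerivAt (fun x : ℝ => x ^ (n + 1) * Real.exp (-b * x ^ 2))
      ((n + 1 : ℝ) * x ^ n * Real.exp (-b * x ^ 2)
        - 2 * b * (x ^ (n + 2) * Real.exp (-b * x ^ 2))) x := by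
    intro x
    have h1 : HasDerivAt (fun x : ℝ => x ^ (n + 1)) ((n + 1 : ℝ) * x ^ n) x := by
      simpa using hasDerivAt_pow (n + 1) x
    have h2 : HasDerivAt (fun x : ℝ => Real.exp (-b * x ^ 2))
        (Real.exp (-b * x ^ 2) * (-b * (2 * x))) x := by
      have h3 : HasDerivAt (fun x : ℝ => -b * x ^ 2) (-b * (2 * x)) x := by
        simpa using ((hasDerivAt_pow 2 x).const_mul (-b))
      exact h3.exp
    have h := h1.mul h2
    exact h.congr_deriv (by ring)
  have hf' : Integrable (fun x : ℝ => (n + 1 : ℝ) * x ^ n * Real.exp (-b * x ^ 2)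
      - 2 * b * (x ^ (n + 2) * Real.exp (-b * x ^ 2))) := by
    have h := (hin.const_mul ((n:ℝ) + 1)).sub (hin2.const_mul (2 * b))
    apply h.congr
    filter_upwards with x
    simp only [Pi.sub_apply]
    ring
  have hzero := integral_eq_zero_of_hasDerivAt_of_integrable hderiv hf' hin1
  have hsplit : (∫ x : ℝ, ((n + 1 : ℝ) * x ^ n * Real.exp (-b * x ^ 2)
      - 2 * b * (x ^ (n + 2) * Real.exp (-b * x ^ 2))))
      = (n + 1 : ℝ) * (∫ x : ℝ, x ^ n * Real.exp (-b * x ^ 2))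
        - 2 * b * ∫ x : ℝ, x ^ (n + 2) * Real.exp (-b * x ^ 2) := by
    rw [integral_sub ((hin.const_mul ((n:ℝ) + 1)).congr (by
        filter_upwards with x; ring)) (hin2.const_mul (2 * b))]
    rw [integral_const_mul]
    congr 1
    rw [← integral_const_mul]
    congr 1 with x
    ring
  rw [hsplit] at hzero
  linarith

lemma aux_llr_eq (N : ℝ) (hN : 0 < N) (a z : ℝ) :
    llr N a z = -(a ^ 2 / N) + Real.log (Real.cosh (2 * a * z / N)) := by
  have hs : 0 < Real.sqrt (Real.pi * N) := Real.sqrt_pos.2 (by positivity)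
  have key : qmix N a z / q0 N z = Real.exp (-(a ^ 2 / N)) * Real.cosh (2 * a * z / N) := by
    rw [qmix, qa, qa, q0, Real.cosh_eq]
    rw [div_eq_iff (by positivity)]
    field_simp
    have hr : Real.exp (-a ^ 2 / N) * (Real.exp (2 * a * z / N) + Real.exp (-(2 * a * z) / N))
        * Real.exp (-z ^ 2 / N)
        = Real.exp (-a ^ 2 / N + 2 * a * z / N + -z ^ 2 / N)
          + Real.exp (-a ^ 2 / N + -(2 * a * z) / N + -z ^ 2 / N) := by
      rw [Real.exp_add, Real.exp_add, Real.exp_add, Real.exp_add]; ring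
    simp only [mul_add, add_mul, ← Real.exp_add]
    congr 1 <;> · congr 1; ring
  rw [show llr N a z = Real.log (qmix N a z / q0 N z) from rfl, key,
    Real.log_mul (Real.exp_pos _).ne' (Real.cosh_pos _).ne', Real.log_exp]

lemma aux_q0_eq (N : ℝ) (z : ℝ) :
    q0 N z = (Real.sqrt (Real.pi * N))⁻¹ * Real.exp (-(1/N) * z ^ 2) := by
  rw [q0]
  congr 1
  congr 1
  ring

lemma aux_integral_q0_pow (N : ℝ) (hN : 0 < N) (n : ℕ) :
    ∫ z : ℝ, q0 N z * z ^ n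
      = (Real.sqrt (Real.pi * N))⁻¹ * ∫ x : ℝ, x ^ n * Real.exp (-(1/N) * x ^ 2) := by
  rw [← integral_const_mul]
  congr 1 with z
  rw [aux_q0_eq]
  ring

lemma aux_q0_moments (N : ℝ) (hN : 0 < N) :
    (∫ z : ℝ, q0 N z * z ^ 0) = 1 ∧ (∫ z : ℝ, q0 N z * z ^ 2) = N / 2 ∧
    (∫ z : ℝ, q0 N z * z ^ 4) = 3 * N ^ 2 / 4 ∧
    (∫ z : ℝ, q0 N z * z ^ 6) = 15 * N ^ 3 / 8 := by
  have hb : 0 < 1/N := by positivity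
  have hs : 0 < Real.sqrt (Real.pi * N) := Real.sqrt_pos.2 (by positivity)
  have hJ0 : (∫ x : ℝ, x ^ 0 * Real.exp (-(1/N) * x ^ 2)) = Real.sqrt (Real.pi * N) := by
    simp only [pow_zero, one_mul]
    rw [integral_gaussian]
    congr 1
    field_simp
  have h0 := aux_gauss_moment_rec hb 0
  have h2 := aux_gauss_moment_rec hb 2
  have h4 := aux_gauss_moment_rec hb 4
  norm_num at h0 h2 h4
  set J0 := ∫ x : ℝ, x ^ 0 * Real.exp (-(1/N) * x ^ 2) with hJ0def
  set J2 := ∫ x : ℝ, x ^ 2 * Real.exp (-(1/N) * x ^ 2) with hJ2def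
  set J4 := ∫ x : ℝ, x ^ 4 * Real.exp (-(1/N) * x ^ 2) with hJ4def
  set J6 := ∫ x : ℝ, x ^ 6 * Real.exp (-(1/N) * x ^ 2) with hJ6def
  have hN' : (N : ℝ) ≠ 0 := hN.ne'
  have e2 : J2 = N / 2 * J0 := by
    have : (1:ℝ) * J0 = 2 * (1/N) * J2 := by
      simpa [hJ0def, hJ2def] using h0
    field_simp at this ⊢
    linarith
  have e4 : J4 = 3 * N / 2 * J2 := by
    have : (3:ℝ) * J2 = 2 * (1/N) * J4 := by
      simpa [hJ2def, hJ4def] using h2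
    field_simp at this ⊢
    linarith
  have e6 : J6 = 5 * N / 2 * J4 := by
    have : (5:ℝ) * J4 = 2 * (1/N) * J6 := by
      simpa [hJ4def, hJ6def] using h4
    field_simp at this ⊢
    linarith
  have hnorm : (Real.sqrt (Real.pi * N))⁻¹ * J0 = 1 := by
    rw [hJ0]
    exact inv_mul_cancel₀ hs.ne'
  refine ⟨?_, ?_, ?_, ?_⟩
  · rw [aux_integral_q0_pow N hN 0, ← hJ0def, hnorm]
  · rw [aux_integral_q0_pow N hN 2, ← hJ2def, e2]
    calc (Real.sqrt (Real.pi * N))⁻¹ * (N / 2 * J0)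
        = N / 2 * ((Real.sqrt (Real.pi * N))⁻¹ * J0) := by ring
      _ = N / 2 := by rw [hnorm, mul_one]
  · rw [aux_integral_q0_pow N hN 4, ← hJ4def, e4, e2]
    calc (Real.sqrt (Real.pi * N))⁻¹ * (3 * N / 2 * (N / 2 * J0))
        = 3 * N ^ 2 / 4 * ((Real.sqrt (Real.pi * N))⁻¹ * J0) := by ring
      _ = 3 * N ^ 2 / 4 := by rw [hnorm, mul_one]
  · rw [aux_integral_q0_pow N hN 6, ← hJ6def, e6, e4, e2]
    calc (Real.sqrt (Real.pi * N))⁻¹ * (5 * N / 2 * (3 * N / 2 * (N / 2 * J0)))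
        = 15 * N ^ 3 / 8 * ((Real.sqrt (Real.pi * N))⁻¹ * J0) := by ring
      _ = 15 * N ^ 3 / 8 := by rw [hnorm, mul_one]


set_option maxHeartbeats 1000000 in
/-- The mean of the log-likelihood ratio `L` under `q₀` equals `-a⁴/N² + O(a⁶)` as `a → 0⁺`. -/
theorem mean_llr_q0 (N : ℝ) (hN : 0 < N) :
    ∃ C > (0 : ℝ), ∃ a₀ > (0 : ℝ), ∀ a : ℝ, 0 < a → a ≤ a₀ →
      |(∫ z : ℝ, q0 N z * llr N a z) + a ^ 4 / N ^ 2| ≤ C * a ^ 6 := by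
  have hb : 0 < 1/N := by positivity
  obtain ⟨m0, m2, m4, m6⟩ := aux_q0_moments N hN
  have hspos : 0 < Real.sqrt (Real.pi * N) := Real.sqrt_pos.2 (by positivity)
  have hq0pos : ∀ z : ℝ, 0 < q0 N z := fun z =>
    mul_pos (inv_pos.2 hspos) (Real.exp_pos _)
  have Iq : ∀ n : ℕ, Integrable fun z : ℝ => q0 N z * z ^ n := by
    intro n
    have h := (aux_integrable_pow_gauss hb n).const_mul ((Real.sqrt (Real.pi * N))⁻¹)
    apply h.congr
    filter_upwards with z
    rw [aux_q0_eq]; ring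
  have hq0_cont : Continuous (q0 N) := by
    unfold q0
    exact continuous_const.mul (Real.continuous_exp.comp (by continuity))
  refine ⟨600 / N ^ 3, by positivity, 1, one_pos, fun a ha ha0 => ?_⟩
  obtain ⟨t, htdef⟩ : ∃ t, t = 2 * a / N := ⟨_, rfl⟩
  have hcosh_cont : Continuous fun z : ℝ => Real.cosh (t * z) :=
    Real.continuous_cosh.comp (continuous_const.mul continuous_id)
  have hg_cont : Continuous fun z : ℝ => Real.log (Real.cosh (t * z)) := by
    apply continuous_iff_continuousAt.2
    intro z
    have h1 : ContinuousAt Real.log (Real.cosh (t * z)) :=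
      Real.continuousAt_log (Real.cosh_pos _).ne'
    exact ContinuousAt.comp (g := Real.log) (f := fun z : ℝ => Real.cosh (t * z))
      h1 hcosh_cont.continuousAt
  have Ig : Integrable fun z : ℝ => q0 N z * Real.log (Real.cosh (t * z)) := by
    apply Integrable.mono' (((Iq 0).add (Iq 2)).const_mul |t|)
    · exact (hq0_cont.mul hg_cont).aestronglyMeasurable
    · filter_upwards with z
      have h1 : 0 ≤ Real.log (Real.cosh (t * z)) := Real.log_nonneg (Real.one_le_cosh _)
      have h2 : Real.log (Real.cosh (t * z)) ≤ |t * z| := aux_log_cosh_le_abs _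
      have h3 : |t * z| ≤ |t| * (1 + z ^ 2) := by
        rw [abs_mul]
        apply mul_le_mul_of_nonneg_left _ (abs_nonneg t)
        nlinarith [sq_abs z, abs_nonneg z]
      have hq := (hq0pos z).le
      rw [Real.norm_eq_abs, abs_of_nonneg (mul_nonneg hq h1)]
      calc q0 N z * Real.log (Real.cosh (t*z)) ≤ q0 N z * (|t| * (1 + z^2)) :=
            mul_le_mul_of_nonneg_left (h2.trans h3) hq
        _ = |t| * (q0 N z * z ^ 0 + q0 N z * z ^ 2) := by ring
  have IP : Integrable fun z : ℝ => q0 N z * ((t*z)^2/2 - (t*z)^4/12) := by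
    have h := ((Iq 2).const_mul (t^2/2)).sub ((Iq 4).const_mul (t^4/12))
    apply h.congr; filter_upwards with z; simp only [Pi.sub_apply]; ring
  have If : Integrable fun z : ℝ =>
      q0 N z * (Real.log (Real.cosh (t*z)) - ((t*z)^2/2 - (t*z)^4/12)) := by
    have h := Ig.sub IP
    apply h.congr; filter_upwards with z; simp only [Pi.sub_apply]; ring
  have hPval : (∫ z : ℝ, q0 N z * ((t*z)^2/2 - (t*z)^4/12))
      = t^2/2 * (N/2) - t^4/12 * (3*N^2/4) := by
    rw [show (fun z : ℝ => q0 N z * ((t*z)^2/2 - (t*z)^4/12))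
        = fun z : ℝ => t^2/2 * (q0 N z * z^2) - t^4/12 * (q0 N z * z^4) from
      funext fun z => by ring]
    rw [integral_sub ((Iq 2).const_mul _) ((Iq 4).const_mul _),
      integral_const_mul, integral_const_mul, m2, m4]
  have hint : (∫ z : ℝ, q0 N z * llr N a z)
      = -(a^2/N) * 1 + (t^2/2 * (N/2) - t^4/12 * (3*N^2/4))
        + ∫ z : ℝ, q0 N z * (Real.log (Real.cosh (t*z)) - ((t*z)^2/2 - (t*z)^4/12)) := by
    have hcongr : (fun z : ℝ => q0 N z * llr N a z)
        = fun z : ℝ => (-(a^2/N) * (q0 N z * z ^ 0) + q0 N z * ((t*z)^2/2 - (t*z)^4/12))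
          + q0 N z * (Real.log (Real.cosh (t*z)) - ((t*z)^2/2 - (t*z)^4/12)) := by
      funext z
      rw [aux_llr_eq N hN a z, show 2 * a * z / N = t * z by rw [htdef]; ring]
      ring
    have I0 : Integrable (fun z : ℝ => -(a^2/N) * (q0 N z * z ^ 0)) :=
      (Iq 0).const_mul _
    have I1 : Integrable (fun z : ℝ =>
        -(a^2/N) * (q0 N z * z ^ 0) + q0 N z * ((t*z)^2/2 - (t*z)^4/12)) := I0.add IP
    rw [hcongr, integral_add I1 If, integral_add I0 IP, integral_const_mul, m0, hPval]
  have hzero : -(a^2/N) * 1 + (t^2/2 * (N/2) - t^4/12 * (3*N^2/4)) + a^4/N^2 = 0 := by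
    rw [htdef]
    field_simp
    ring
  have hmain : (∫ z : ℝ, q0 N z * llr N a z) + a ^ 4 / N ^ 2
      = ∫ z : ℝ, q0 N z * (Real.log (Real.cosh (t*z)) - ((t*z)^2/2 - (t*z)^4/12)) := by
    rw [hint]; linarith
  rw [hmain]
  have habs : |∫ z : ℝ, q0 N z * (Real.log (Real.cosh (t*z)) - ((t*z)^2/2 - (t*z)^4/12))|
      ≤ ∫ z : ℝ, |q0 N z * (Real.log (Real.cosh (t*z)) - ((t*z)^2/2 - (t*z)^4/12))| := by
    exact norm_integral_le_integral_norm (μ := volume)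
      (fun z : ℝ => q0 N z * (Real.log (Real.cosh (t*z)) - ((t*z)^2/2 - (t*z)^4/12)))
  calc |∫ z : ℝ, q0 N z * (Real.log (Real.cosh (t*z)) - ((t*z)^2/2 - (t*z)^4/12))|
      ≤ ∫ z : ℝ, |q0 N z * (Real.log (Real.cosh (t*z)) - ((t*z)^2/2 - (t*z)^4/12))| := habs
    _ ≤ ∫ z : ℝ, 5 * t^6 * (q0 N z * z^6) := by
        apply integral_mono If.abs ((Iq 6).const_mul _)
        intro z
        have hbd := aux_log_cosh_bound (t*z)
        have hq := (hq0pos z).le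
        calc |q0 N z * (Real.log (Real.cosh (t*z)) - ((t*z)^2/2 - (t*z)^4/12))|
            = q0 N z * |Real.log (Real.cosh (t*z)) - ((t*z)^2/2 - (t*z)^4/12)| := by
              rw [abs_mul, abs_of_nonneg hq]
          _ ≤ q0 N z * (5 * (t*z)^6) := mul_le_mul_of_nonneg_left hbd hq
          _ = 5 * t^6 * (q0 N z * z^6) := by ring
    _ = 5 * t^6 * (15 * N^3/8) := by rw [integral_const_mul, m6]
    _ = 600 / N^3 * a^6 := by
        rw [htdef]; field_simp; ring
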